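/- Length formula for Dirichlet steady states: let L > 0 and let φ : [−L/2, L/2] → ℝ be C² with φ''(x) = f(φ(x)) on [−L/2, L/2], φ(−L/2) = φ(L/2) = 0, φ'(0) = 0, φ'(x) > 0 for all x ∈ [−L/2, 0), and set M := φ(0). Then F(s) > F(M) for every s ∈ [0, M), the improper integral ∫₀^M ds/√(F(s) − F(M)) converges, and L = √2 ∫₀^M ds/√(F(s) − F(M)). -/

import Mathlib

open MeasureTheory

/-- Length formula for Dirichlet steady states: if `φ` is `C²` on `[−L/2, L/2]`
with `φ'' = f(φ)` (`f := F'`), zero boundary values, `φ'(0) = 0`, `φ' > 0` on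
`[−L/2, 0)`, and `M := φ(0)`, then `F(s) > F(M)` on `[0, M)`, the improper
integral `∫₀^M ds/√(F(s) − F(M))` converges, and
`L = √2 ∫₀^M ds/√(F(s) − F(M))`. -/
theorem length_formula_dirichlet_steady_state
    (F : ℝ → ℝ) (hF : ContDiff ℝ 1 F)
    (L : ℝ) (hL : 0 < L)
    (φ φ' φ'' : ℝ → ℝ)
    (hd1 : ∀ x ∈ Set.Icc (-(L / 2)) (L / 2),
      HasDerivWithinAt φ (φ' x) (Set.Icc (-(L / 2)) (L / 2)) x)
    (hd2 : ∀ x ∈ Set.Icc (-(L / 2)) (L / 2),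
      HasDerivWithinAt φ' (φ'' x) (Set.Icc (-(L / 2)) (L / 2)) x)
    (hcont : ContinuousOn φ'' (Set.Icc (-(L / 2)) (L / 2)))
    (heq : ∀ x ∈ Set.Icc (-(L / 2)) (L / 2), φ'' x = deriv F (φ x))
    (hb1 : φ (-(L / 2)) = 0) (hb2 : φ (L / 2) = 0)
    (h0 : φ' 0 = 0)
    (hpos : ∀ x ∈ Set.Ico (-(L / 2)) (0 : ℝ), 0 < φ' x) :
    (∀ s ∈ Set.Ico (0 : ℝ) (φ 0), F (φ 0) < F s) ∧
    IntegrableOn (fun s => 1 / Real.sqrt (F s - F (φ 0))) (Set.Ioo 0 (φ 0)) ∧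
    L = Real.sqrt 2 * ∫ s in Set.Ioo 0 (φ 0), 1 / Real.sqrt (F s - F (φ 0)) := by
  have hL2 : (0:ℝ) < L / 2 := by linarith
  set I := Set.Icc (-(L / 2)) (L / 2) with hIdef
  have h0I : (0:ℝ) ∈ I := ⟨by linarith, by linarith⟩
  have haI : -(L/2) ∈ I := ⟨le_refl _, by linarith⟩
  -- energy function
  set E : ℝ → ℝ := fun x => φ' x ^ 2 / 2 - F (φ x) with hEdef
  have hFd : Differentiable ℝ F := hF.differentiable one_ne_zero
  have hE : ∀ x ∈ I, HasDerivWithinAt E 0 I x := by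
    intro x hx
    have h1 := hd1 x hx
    have h2 := hd2 x hx
    have hF' : HasDerivAt F (deriv F (φ x)) (φ x) := (hFd (φ x)).hasDerivAt
    have := (((h2.pow 2).div_const 2).sub (hF'.comp_hasDerivWithinAt x h1))
    refine this.congr_deriv ?_
    rw [heq x hx]; push_cast; ring
  have hEcont : ContinuousOn E I := by
    have hφc : ContinuousOn φ I := fun x hx => (hd1 x hx).continuousWithinAt
    have hφ'c : ContinuousOn φ' I := fun x hx => (hd2 x hx).continuousWithinAt
    exact ((hφ'c.pow 2).div_const 2).sub (hFd.continuous.comp_continuousOn hφc)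
  have hEconst : ∀ x ∈ I, E x = E (-(L/2)) := by
    apply constant_of_has_deriv_right_zero hEcont
    intro x hx
    exact (hE x (Set.Ico_subset_Icc_self hx)).mono_of_mem_nhdsWithin (Icc_mem_nhdsGE_of_mem hx)
  -- the key identity
  have hsq : ∀ x ∈ I, φ' x ^ 2 = 2 * (F (φ x) - F (φ 0)) := by
    intro x hx
    have h1 := hEconst x hx
    have h2 := hEconst 0 h0I
    simp only [hEdef, h0] at h1 h2
    nlinarith [h1, h2]
  have hsubJ : Set.Icc (-(L/2)) (0:ℝ) ⊆ I := Set.Icc_subset_Icc le_rfl (by linarith)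
  -- strict monotonicity on [-L/2, 0]
  have hmono : StrictMonoOn φ (Set.Icc (-(L/2)) (0:ℝ)) := by
    apply strictMonoOn_of_hasDerivWithinAt_pos (convex_Icc _ _)
      (fun x hx => (hd1 x (hsubJ hx)).continuousWithinAt.mono hsubJ)
    · rw [interior_Icc]
      intro x hx
      exact (hd1 x (hsubJ (Set.Ioo_subset_Icc_self hx))).mono
        (Set.Ioo_subset_Icc_self.trans hsubJ)
    · intro x hx
      rw [interior_Icc] at hx
      exact hpos x (Set.Ioo_subset_Ico_self hx)
  have hMpos : 0 < φ 0 := by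
    have := hmono ⟨le_refl _, by linarith⟩ ⟨by linarith, le_refl _⟩ (by linarith)
    rwa [hb1] at this
  have hφcJ : ContinuousOn φ (Set.Icc (-(L/2)) (0:ℝ)) :=
    fun x hx => ((hd1 x (hsubJ hx)).continuousWithinAt.mono hsubJ)
  -- Claim 1
  have claim1 : ∀ s ∈ Set.Ico (0:ℝ) (φ 0), F (φ 0) < F s := by
    intro s hs
    have : s ∈ Set.Ico (φ (-(L/2))) (φ 0) := by rwa [hb1]
    obtain ⟨x, hx, rfl⟩ := intermediate_value_Ico (by linarith : -(L/2) ≤ (0:ℝ)) hφcJ this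
    have hx' := hpos x hx
    have := hsq x (hsubJ (Set.Ico_subset_Icc_self hx))
    nlinarith
  refine ⟨claim1, ?_⟩
  -- change of variables setup
  have hinj : Set.InjOn φ (Set.Ioo (-(L/2)) (0:ℝ)) :=
    (hmono.injOn).mono Set.Ioo_subset_Icc_self
  have hd1' : ∀ x ∈ Set.Ioo (-(L/2)) (0:ℝ),
      HasDerivWithinAt φ (φ' x) (Set.Ioo (-(L/2)) (0:ℝ)) x := fun x hx =>
    (hd1 x (hsubJ (Set.Ioo_subset_Icc_self hx))).mono (Set.Ioo_subset_Icc_self.trans hsubJ)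
  have himg : φ '' Set.Ioo (-(L/2)) (0:ℝ) = Set.Ioo 0 (φ 0) := by
    apply Set.Subset.antisymm
    · rintro _ ⟨x, hx, rfl⟩
      constructor
      · have := hmono ⟨le_refl _, by linarith⟩ (Set.Ioo_subset_Icc_self hx) hx.1
        rwa [hb1] at this
      · exact hmono (Set.Ioo_subset_Icc_self hx) ⟨by linarith, le_refl _⟩ hx.2
    · have := intermediate_value_Ioo (by linarith : -(L/2) ≤ (0:ℝ)) hφcJ
      rwa [hb1] at this
  set g : ℝ → ℝ := fun s => 1 / Real.sqrt (F s - F (φ 0)) with hgdef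
  -- pointwise value of transformed integrand
  have hptwise : ∀ x ∈ Set.Ioo (-(L/2)) (0:ℝ), |φ' x| • g (φ x) = Real.sqrt 2 := by
    intro x hx
    have hx' := hpos x (Set.Ioo_subset_Ico_self hx)
    have hsq' := hsq x (hsubJ (Set.Ioo_subset_Icc_self hx))
    have hFM : F (φ x) - F (φ 0) = φ' x ^ 2 / 2 := by linarith
    have hs2 : (0:ℝ) < Real.sqrt 2 := Real.sqrt_pos.2 (by norm_num)
    have : Real.sqrt (F (φ x) - F (φ 0)) = φ' x / Real.sqrt 2 := by
      rw [hFM, Real.sqrt_div (sq_nonneg _) 2, Real.sqrt_sq hx'.le]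
    simp only [hgdef, smul_eq_mul, this, abs_of_pos hx']
    field_simp
  have hmeas : MeasurableSet (Set.Ioo (-(L/2)) (0:ℝ)) := measurableSet_Ioo
  -- integrability
  have hiff := integrableOn_image_iff_integrableOn_abs_deriv_smul hmeas hd1' hinj g
  rw [himg] at hiff
  have hIntConst : IntegrableOn (fun _ : ℝ => Real.sqrt 2) (Set.Ioo (-(L/2)) (0:ℝ)) :=
    integrableOn_const measure_Ioo_lt_top.ne
  have hInt2 : IntegrableOn (fun x => |φ' x| • g (φ x)) (Set.Ioo (-(L/2)) (0:ℝ)) :=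
    hIntConst.congr_fun (fun x hx => (hptwise x hx).symm) hmeas
  refine ⟨hiff.2 hInt2, ?_⟩
  -- value of integral
  have hint := integral_image_eq_integral_abs_deriv_smul hmeas hd1' hinj g
  rw [himg] at hint
  have hintval : ∫ x in Set.Ioo (-(L/2)) (0:ℝ), |φ' x| • g (φ x)
      = Real.sqrt 2 * (L/2) := by
    rw [setIntegral_congr_fun hmeas hptwise, setIntegral_const, measureReal_def, Real.volume_Ioo,
      smul_eq_mul]
    rw [ENNReal.toReal_ofReal (by linarith)]
    ring
  rw [hgdef] at hint
  rw [hint, hintval, ← mul_assoc, Real.mul_self_sqrt (by norm_num)]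
  ring
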